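/- For every λ ∈ ℚ and integers ℓ ≥ 1, k ≥ 1, the sequence u : ℕ → ℚ whose formal power series is the inverse of (1 − λ·x^ℓ)^k in ℚ[[x]] (i.e., the unique u with (1 − λ·x^ℓ)^k · S_u = 1) belongs to PolyRat. -/

import Mathlib

/-- The smallest class of sequences `ℕ → ℚ` containing all arithmetic and all geometric
sequences and closed under sum, Hadamard product, shift, and `k`-ary shuffle for `k ≥ 1`. -/
inductive PolyRat : (ℕ → ℚ) → Prop where
  | arith (a b : ℚ) (u : ℕ → ℚ) (h0 : u 0 = a) (hs : ∀ n, u (n + 1) = u n + b) : PolyRat u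
  | geo (a l : ℚ) (u : ℕ → ℚ) (h0 : u 0 = a) (hs : ∀ n, u (n + 1) = l * u n) : PolyRat u
  | sum (u v : ℕ → ℚ) (hu : PolyRat u) (hv : PolyRat v) : PolyRat (fun n => u n + v n)
  | had (u v : ℕ → ℚ) (hu : PolyRat u) (hv : PolyRat v) : PolyRat (fun n => u n * v n)
  | shift (a : ℚ) (u w : ℕ → ℚ) (hu : PolyRat u) (h0 : w 0 = a)
      (hs : ∀ n, w (n + 1) = u n) : PolyRat w
  | shuffle (k : ℕ) (hk : 1 ≤ k) (us : Fin k → ℕ → ℚ) (w : ℕ → ℚ)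
      (hw : ∀ (n : ℕ) (i : Fin k), w (k * n + (i : ℕ)) = us i n)
      (hus : ∀ i, PolyRat (us i)) : PolyRat w

lemma polyRat_const (c : ℚ) : PolyRat (fun _ => c) :=
  .arith c 0 _ rfl (fun n => by simp)

lemma polyRat_geo (lam : ℚ) : PolyRat (fun n => lam ^ n) :=
  .geo 1 lam _ (pow_zero lam) (fun n => by rw [pow_succ, mul_comm])

lemma polyRat_choose (j : ℕ) : PolyRat (fun m => ((m + j).choose j : ℚ)) := by
  induction j with
  | zero => simpa using polyRat_const 1
  | succ j ih =>
    have harith : PolyRat (fun m => ((m : ℚ) + j + 1) / (j + 1)) := by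
      refine .arith ((j + 1) / (j + 1)) (1 / (j + 1)) _ (by push_cast; ring) (fun n => by
        push_cast; ring)
    have hh := PolyRat.had _ _ ih harith
    convert hh using 1
    funext m
    have h := Nat.add_one_mul_choose_eq (m + j) j
    have hj : ((j : ℚ) + 1) ≠ 0 := by positivity
    rw [mul_div_assoc', eq_div_iff hj]
    have e : m + (j + 1) = m + j + 1 := rfl
    rw [e]
    have hc := congrArg (Nat.cast (R := ℚ)) h
    push_cast at hc
    linarith

/-- Candidate coefficient sequence for the inverse of `(1 - λ x^l)^(j+1)`. -/
noncomputable def invSeq (lam : ℚ) (l j : ℕ) : ℕ → ℚ :=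
  fun n => if l ∣ n then ((n / l + j).choose j : ℚ) * lam ^ (n / l) else 0

open PowerSeries in
lemma invSeq_mul_one_sub (lam : ℚ) (l : ℕ) (hl : 1 ≤ l) (i : ℕ) :
    PowerSeries.mk (invSeq lam l (i + 1)) * (1 - PowerSeries.C (R := ℚ) lam * PowerSeries.X ^ l)
      = PowerSeries.mk (invSeq lam l i) := by
  ext n
  rw [mul_sub, mul_one, map_sub, coeff_mk, coeff_mk]
  rw [show PowerSeries.mk (invSeq lam l (i + 1)) * (C (R := ℚ) lam * X ^ l)
      = (C (R := ℚ) lam * PowerSeries.mk (invSeq lam l (i + 1))) * X ^ l by ring]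
  rw [coeff_mul_X_pow', coeff_C_mul, coeff_mk]
  by_cases hd : l ∣ n
  · rcases hd with ⟨m, rfl⟩
    rcases Nat.eq_zero_or_pos m with rfl | hm
    · simp only [Nat.mul_zero]
      rw [if_neg (by omega)]
      simp [invSeq]
    · obtain ⟨m', rfl⟩ : ∃ m', m = m' + 1 := ⟨m - 1, by omega⟩
      have hle : l ≤ l * (m' + 1) := Nat.le_mul_of_pos_right l (by omega)
      rw [if_pos hle]
      have h1 : l * (m' + 1) - l = l * m' := by simp [Nat.mul_succ]
      have hdvd : l ∣ l * (m' + 1) := ⟨m' + 1, rfl⟩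
      have hdvd' : l ∣ l * m' := ⟨m', rfl⟩
      simp only [invSeq, h1, if_pos hdvd, if_pos hdvd']
      rw [Nat.mul_div_cancel_left _ (by omega : 0 < l),
          Nat.mul_div_cancel_left _ (by omega : 0 < l)]
      have hpascal : ((m' + 1) + (i + 1)).choose (i + 1)
          = (m' + (i + 1)).choose i + (m' + (i + 1)).choose (i + 1) := by
        have := Nat.choose_succ_succ (m' + i + 1) i
        rw [show m' + 1 + (i + 1) = m' + i + 1 + 1 by omega, show m' + (i + 1) = m' + i + 1 by omega]
        exact this
      have hc := congrArg (Nat.cast (R := ℚ)) hpascal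
      push_cast at hc
      rw [pow_succ]
      have e : m' + (i + 1) = m' + 1 + i := by omega
      rw [e] at hc
      rw [hc]
      ring
  · simp only [invSeq, if_neg hd]
    split_ifs with hle hdd
    · exfalso
      have hn : n - l + l = n := by omega
      exact hd (hn ▸ Nat.dvd_add hdd dvd_rfl)
    · simp
    · simp

open PowerSeries in
lemma invSeq_zero_mul (lam : ℚ) (l : ℕ) (hl : 1 ≤ l) :
    PowerSeries.mk (invSeq lam l 0) * (1 - PowerSeries.C (R := ℚ) lam * PowerSeries.X ^ l) = 1 := by
  ext n
  rw [mul_sub, mul_one, map_sub, coeff_mk]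
  rw [show PowerSeries.mk (invSeq lam l 0) * (C (R := ℚ) lam * X ^ l)
      = (C (R := ℚ) lam * PowerSeries.mk (invSeq lam l 0)) * X ^ l by ring]
  rw [coeff_mul_X_pow', coeff_C_mul, coeff_mk, coeff_one]
  by_cases hd : l ∣ n
  · rcases hd with ⟨m, rfl⟩
    rcases Nat.eq_zero_or_pos m with rfl | hm
    · simp only [Nat.mul_zero]
      rw [if_neg (by omega)]
      simp [invSeq]
    · obtain ⟨m', rfl⟩ : ∃ m', m = m' + 1 := ⟨m - 1, by omega⟩
      have hle : l ≤ l * (m' + 1) := Nat.le_mul_of_pos_right l (by omega)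
      rw [if_pos hle, if_neg (by positivity)]
      have h1 : l * (m' + 1) - l = l * m' := by simp [Nat.mul_succ]
      have hdvd : l ∣ l * (m' + 1) := ⟨m' + 1, rfl⟩
      have hdvd' : l ∣ l * m' := ⟨m', rfl⟩
      simp only [invSeq, h1, if_pos hdvd, if_pos hdvd']
      rw [Nat.mul_div_cancel_left _ (by omega : 0 < l),
          Nat.mul_div_cancel_left _ (by omega : 0 < l)]
      simp [pow_succ]
      ring
  · have hn0 : n ≠ 0 := by rintro rfl; exact hd (dvd_zero l)
    rw [if_neg hn0]
    simp only [invSeq, if_neg hd]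
    split_ifs with hle hdd
    · exfalso
      have hn : n - l + l = n := by omega
      exact hd (hn ▸ Nat.dvd_add hdd dvd_rfl)
    · simp
    · simp

open PowerSeries in
lemma invSeq_mul_pow (lam : ℚ) (l : ℕ) (hl : 1 ≤ l) (i : ℕ) :
    PowerSeries.mk (invSeq lam l i)
      * (1 - PowerSeries.C (R := ℚ) lam * PowerSeries.X ^ l) ^ (i + 1) = 1 := by
  induction i with
  | zero => simpa using invSeq_zero_mul lam l hl
  | succ i ih =>
    rw [pow_succ']
    rw [show PowerSeries.mk (invSeq lam l (i + 1))
        * ((1 - C (R := ℚ) lam * X ^ l) * (1 - C (R := ℚ) lam * X ^ l) ^ (i + 1))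
        = (PowerSeries.mk (invSeq lam l (i + 1)) * (1 - C (R := ℚ) lam * X ^ l))
          * (1 - C (R := ℚ) lam * X ^ l) ^ (i + 1) by ring]
    rw [invSeq_mul_one_sub lam l hl i, ih]

lemma polyRat_invSeq (lam : ℚ) (l j : ℕ) (hl : 1 ≤ l) : PolyRat (invSeq lam l j) := by
  refine PolyRat.shuffle l hl
    (fun i => if (i : ℕ) = 0 then (fun m => ((m + j).choose j : ℚ) * lam ^ m)
      else fun _ => 0) _ ?_ ?_
  · intro n i
    beta_reduce
    by_cases hi : (i : ℕ) = 0
    · rw [hi, if_pos rfl]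
      simp only [Nat.add_zero, invSeq]
      rw [if_pos ⟨n, rfl⟩, Nat.mul_div_cancel_left _ (by omega : 0 < l)]
    · rw [if_neg hi]
      have hnd : ¬ l ∣ l * n + (i : ℕ) := by
        intro h
        have : l ∣ (i : ℕ) := (Nat.dvd_add_right ⟨n, rfl⟩).mp h
        have := Nat.le_of_dvd (by omega) this
        have := i.isLt
        omega
      simp [invSeq, hnd]
  · intro i
    beta_reduce
    by_cases hi : (i : ℕ) = 0
    · rw [if_pos hi]
      exact PolyRat.had _ _ (polyRat_choose j) (polyRat_geo lam)
    · rw [if_neg hi]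
      exact polyRat_const 0

/-- For every `λ ∈ ℚ` and integers `ℓ ≥ 1`, `k ≥ 1`, the sequence whose
formal power series is the inverse of `(1 − λ·x^ℓ)^k` in `ℚ[[x]]` belongs to PolyRat. -/
theorem inv_one_sub_geom_pow_mem_polyRat (lam : ℚ) (l k : ℕ) (hl : 1 ≤ l) (hk : 1 ≤ k)
    (u : ℕ → ℚ)
    (hu : (1 - PowerSeries.C (R := ℚ) lam * PowerSeries.X ^ l) ^ k * PowerSeries.mk u = 1) :
    PolyRat u := by
  obtain ⟨i, rfl⟩ : ∃ i, k = i + 1 := ⟨k - 1, by omega⟩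
  have hv := invSeq_mul_pow lam l hl i
  have hmk : PowerSeries.mk u = PowerSeries.mk (invSeq lam l i) := by
    calc PowerSeries.mk u
        = (PowerSeries.mk (invSeq lam l i)
            * (1 - PowerSeries.C (R := ℚ) lam * PowerSeries.X ^ l) ^ (i + 1))
          * PowerSeries.mk u := by rw [hv, one_mul]
      _ = PowerSeries.mk (invSeq lam l i)
            * ((1 - PowerSeries.C (R := ℚ) lam * PowerSeries.X ^ l) ^ (i + 1)
              * PowerSeries.mk u) := by ring
      _ = PowerSeries.mk (invSeq lam l i) := by rw [hu, mul_one]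
  have hfun : u = invSeq lam l i := by
    funext n
    have := congrArg (PowerSeries.coeff (R := ℚ) n) hmk
    simpa using this
  rw [hfun]
  exact polyRat_invSeq lam l i hl
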